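/- Let f : [−1,1] → ℝ be given by a convergent power series f(ρ) = Σ_{n≥0} bₙ ρⁿ with all bₙ ≥ 0. If bₙ > 0 for infinitely many even n and infinitely many odd n, then for every d ≥ 1 and every finite set of distinct points x₁,…,x_N on the unit sphere S^{d−1}, the matrix K with K_{ij} = f(⟨x_i, x_j⟩) is strictly positive definite. -/

import Mathlib

open Set

set_option maxHeartbeats 1000000

lemma inner_eq_sum' {d N : ℕ} (x : Fin N → EuclideanSpace ℝ (Fin d)) (i j : Fin N) :
    (inner ℝ (x i) (x j) : ℝ) = ∑ k, x i k * x j k := by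
  simp [PiLp.inner_apply, RCLike.inner_apply, mul_comm]

lemma pow_kernel_nonneg' {d N : ℕ} (x : Fin N → EuclideanSpace ℝ (Fin d))
    (c : Fin N → ℝ) (n : ℕ) :
    0 ≤ ∑ p : Fin N × Fin N, c p.1 * c p.2 * (inner ℝ (x p.1) (x p.2) : ℝ) ^ n := by
  have expand : ∀ i j : Fin N, (inner ℝ (x i) (x j) : ℝ) ^ n
      = ∑ q : Fin n → Fin d, (∏ t, x i (q t)) * (∏ t, x j (q t)) := by
    intro i j
    rw [inner_eq_sum', Finset.sum_pow' Finset.univ (fun k => x i k * x j k) n,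
      Fintype.piFinset_univ]
    exact Finset.sum_congr rfl fun q _ => by rw [Finset.prod_mul_distrib]
  have key : ∑ p : Fin N × Fin N, c p.1 * c p.2 * (inner ℝ (x p.1) (x p.2) : ℝ) ^ n
      = ∑ q : Fin n → Fin d, (∑ i, c i * ∏ t, x i (q t)) ^ 2 := by
    calc ∑ p : Fin N × Fin N, c p.1 * c p.2 * (inner ℝ (x p.1) (x p.2) : ℝ) ^ n
        = ∑ p : Fin N × Fin N, ∑ q : Fin n → Fin d,
            (c p.1 * ∏ t, x p.1 (q t)) * (c p.2 * ∏ t, x p.2 (q t)) := by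
          refine Finset.sum_congr rfl fun p _ => ?_
          rw [expand, Finset.mul_sum]; exact Finset.sum_congr rfl fun q _ => by ring
      _ = ∑ q : Fin n → Fin d, ∑ p : Fin N × Fin N,
            (c p.1 * ∏ t, x p.1 (q t)) * (c p.2 * ∏ t, x p.2 (q t)) := Finset.sum_comm
      _ = ∑ q : Fin n → Fin d, (∑ i, c i * ∏ t, x i (q t)) ^ 2 := by
          refine Finset.sum_congr rfl fun q _ => ?_
          rw [sq, Finset.sum_mul_sum, ← Fintype.sum_prod_type']
  rw [key]
  exact Finset.sum_nonneg fun q _ => sq_nonneg _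

/-- Gneiting/Jacot criterion: a dot-product kernel `f(⟨x,y⟩) = Σ bₙ ρⁿ` with
nonnegative coefficients, infinitely many positive even and odd ones, is strictly
positive definite on the unit sphere in every dimension `d ≥ 1`. -/
theorem dot_product_kernel_strictly_positive_definite
    (f : ℝ → ℝ) (b : ℕ → ℝ) (hb : ∀ n, 0 ≤ b n)
    (hsum : ∀ ρ ∈ Icc (-1 : ℝ) 1, HasSum (fun n => b n * ρ ^ n) (f ρ))
    (heven : {n : ℕ | Even n ∧ 0 < b n}.Infinite)
    (hodd : {n : ℕ | Odd n ∧ 0 < b n}.Infinite) :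
    ∀ d : ℕ, 1 ≤ d → ∀ N : ℕ, ∀ x : Fin N → EuclideanSpace ℝ (Fin d),
      (∀ i, ‖x i‖ = 1) → Function.Injective x →
      ∀ c : Fin N → ℝ, c ≠ 0 →
        0 < ∑ i, ∑ j, c i * c j * f (inner ℝ (x i) (x j) : ℝ) := by
  intro d hd N x hx hinj c hc
  classical
  set s : Fin N → Fin N → ℝ := fun i j => inner ℝ (x i) (x j) with hsdef
  -- basic facts about s
  have hs_mem : ∀ i j, s i j ∈ Icc (-1 : ℝ) 1 := by
    intro i j
    have h := abs_real_inner_le_norm (x i) (x j)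
    rw [hx i, hx j, mul_one] at h
    have := abs_le.mp h
    exact ⟨this.1, this.2⟩
  have hs_diag : ∀ i, s i i = 1 := by
    intro i
    have := real_inner_self_eq_norm_sq (x i)
    simp only [hsdef]
    rw [this, hx i]; norm_num
  have hs_neg : ∀ i j, s i j = -1 → x j = - x i := by
    intro i j h
    have hn : ‖x i + x j‖ ^ 2 = ‖x i‖ ^ 2 + 2 * (inner ℝ (x i) (x j) : ℝ) + ‖x j‖ ^ 2 :=
      norm_add_sq_real (x i) (x j)
    rw [hx i, hx j] at hn
    have : (s i j : ℝ) = inner ℝ (x i) (x j) := rfl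
    rw [← this, h] at hn
    have h0 : ‖x i + x j‖ ^ 2 = 0 := by rw [hn]; ring
    have := pow_eq_zero_iff (n := 2) (by norm_num) |>.mp h0
    have := norm_eq_zero.mp this
    have : x j = - x i := by
      rw [add_eq_zero_iff_eq_neg] at this
      linear_combination (norm := module) this
    exact this
  have hs_lt_one : ∀ i j, i ≠ j → s i j < 1 := by
    intro i j hij
    rcases lt_or_eq_of_le (hs_mem i j).2 with h | h
    · exact h
    · exfalso
      have hn : ‖x i - x j‖ ^ 2 = ‖x i‖ ^ 2 - 2 * (inner ℝ (x i) (x j) : ℝ) + ‖x j‖ ^ 2 :=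
        norm_sub_sq_real (x i) (x j)
      rw [hx i, hx j] at hn
      have hs1 : (inner ℝ (x i) (x j) : ℝ) = 1 := h
      rw [hs1] at hn
      have h0 : ‖x i - x j‖ ^ 2 = 0 := by rw [hn]; ring
      have := pow_eq_zero_iff (n := 2) (by norm_num) |>.mp h0
      have := norm_eq_zero.mp this
      exact hij (hinj (by rwa [sub_eq_zero] at this))
  -- quantities
  set A : ℝ := ∑ i, c i ^ 2 with hAdef
  have hA : 0 < A := by
    obtain ⟨i, hi⟩ := Function.ne_iff.mp hc
    refine Finset.sum_pos' (fun j _ => sq_nonneg _) ⟨i, Finset.mem_univ i, ?_⟩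
    exact (sq_nonneg _).lt_of_ne (Ne.symm (pow_ne_zero 2 hi))
  set M : Finset (Fin N × Fin N) := Finset.univ.filter (fun p => s p.1 p.2 = -1) with hMdef
  set R : Finset (Fin N × Fin N) :=
    Finset.univ.filter (fun p => p.1 ≠ p.2 ∧ s p.1 p.2 ≠ -1) with hRdef
  set D : Finset (Fin N × Fin N) := Finset.univ.filter (fun p => p.1 = p.2) with hDdef
  set B : ℝ := ∑ p ∈ M, c p.1 * c p.2 with hBdef
  have hM_ne : ∀ p ∈ M, p.1 ≠ p.2 := by
    intro p hp heq
    have hs1 : s p.1 p.2 = -1 := (Finset.mem_filter.mp hp).2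
    rw [← heq, hs_diag] at hs1
    norm_num at hs1
  set G : ℕ → ℝ := fun n => ∑ p : Fin N × Fin N, c p.1 * c p.2 * s p.1 p.2 ^ n with hGdef
  set r : ℕ → ℝ := fun n => ∑ p ∈ R, c p.1 * c p.2 * s p.1 p.2 ^ n with hrdef
  -- decomposition
  have decomp : ∀ n, G n = A + (-1 : ℝ) ^ n * B + r n := by
    intro n
    have h1 : G n = (∑ p ∈ D, c p.1 * c p.2 * s p.1 p.2 ^ n)
        + ∑ p ∈ Finset.univ.filter (fun p : Fin N × Fin N => ¬ p.1 = p.2),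
            c p.1 * c p.2 * s p.1 p.2 ^ n := by
      rw [hGdef, hDdef]
      exact (Finset.sum_filter_add_sum_filter_not _ _ _).symm
    have hDsum : ∑ p ∈ D, c p.1 * c p.2 * s p.1 p.2 ^ n = A := by
      rw [hDdef, hAdef]
      refine Finset.sum_nbij' Prod.fst (fun i => (i, i)) ?_ ?_ ?_ ?_ ?_
      · intro p hp; exact Finset.mem_univ _
      · intro i _; simp [hDdef]
      · intro p hp
        exact Prod.ext rfl (Finset.mem_filter.mp hp).2
      · intro i _; rfl
      · intro p hp
        have h2 := (Finset.mem_filter.mp hp).2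
        rw [← h2, hs_diag, one_pow, mul_one, sq]
    have hsplit2 : ∑ p ∈ Finset.univ.filter (fun p : Fin N × Fin N => ¬ p.1 = p.2),
            c p.1 * c p.2 * s p.1 p.2 ^ n
        = (∑ p ∈ M, c p.1 * c p.2 * s p.1 p.2 ^ n) + r n := by
      rw [← Finset.sum_filter_add_sum_filter_not
        (Finset.univ.filter (fun p : Fin N × Fin N => ¬ p.1 = p.2))
        (fun p => s p.1 p.2 = -1)]
      congr 1
      · apply Finset.sum_congr _ (fun _ _ => rfl)
        rw [Finset.filter_filter, hMdef]
        apply Finset.filter_congr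
        intro p _
        constructor
        · intro h; exact h.2
        · intro h
          refine ⟨?_, h⟩
          intro heq
          rw [← heq, hs_diag] at h; norm_num at h
      · apply Finset.sum_congr _ (fun _ _ => rfl)
        rw [Finset.filter_filter, hRdef]
    have hMsum : ∑ p ∈ M, c p.1 * c p.2 * s p.1 p.2 ^ n = (-1 : ℝ) ^ n * B := by
      rw [hBdef, Finset.mul_sum]
      refine Finset.sum_congr rfl fun p hp => ?_
      rw [(Finset.mem_filter.mp hp).2]; ring
    rw [h1, hDsum, hsplit2, hMsum, hrdef]; ring
  -- |B| ≤ A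
  have habs_le : ∀ a b : ℝ, |a * b| ≤ (a ^ 2 + b ^ 2) / 2 := by
    intro a b
    rw [abs_mul]
    nlinarith [sq_nonneg (|a| - |b|), sq_abs a, sq_abs b, abs_nonneg a, abs_nonneg b]
  have hfst_le : ∑ p ∈ M, c p.1 ^ 2 ≤ A := by
    have hinjOn : ∀ p ∈ M, ∀ q ∈ M, p.1 = q.1 → p = q := by
      intro p hp q hq hpq
      have h1 : x p.2 = - x p.1 := hs_neg _ _ (Finset.mem_filter.mp hp).2
      have h2 : x q.2 = - x q.1 := hs_neg _ _ (Finset.mem_filter.mp hq).2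
      have : x p.2 = x q.2 := by rw [h1, h2, hpq]
      exact Prod.ext hpq (hinj this)
    calc ∑ p ∈ M, c p.1 ^ 2 = ∑ i ∈ M.image Prod.fst, c i ^ 2 :=
          (Finset.sum_image (f := fun i => c i ^ 2) hinjOn).symm
      _ ≤ A := Finset.sum_le_sum_of_subset_of_nonneg (Finset.subset_univ _)
          (fun i _ _ => sq_nonneg _)
  have hsnd_le : ∑ p ∈ M, c p.2 ^ 2 ≤ A := by
    have hinjOn : ∀ p ∈ M, ∀ q ∈ M, p.2 = q.2 → p = q := by
      intro p hp q hq hpq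
      have h1 : x p.2 = - x p.1 := hs_neg _ _ (Finset.mem_filter.mp hp).2
      have h2 : x q.2 = - x q.1 := hs_neg _ _ (Finset.mem_filter.mp hq).2
      have h3 : -x p.1 = -x q.1 := by rw [← h1, ← h2, hpq]
      exact Prod.ext (hinj (neg_injective h3)) hpq
    calc ∑ p ∈ M, c p.2 ^ 2 = ∑ i ∈ M.image Prod.snd, c i ^ 2 :=
          (Finset.sum_image (f := fun i => c i ^ 2) hinjOn).symm
      _ ≤ A := Finset.sum_le_sum_of_subset_of_nonneg (Finset.subset_univ _)
          (fun i _ _ => sq_nonneg _)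
  have hBA : |B| ≤ A := by
    calc |B| ≤ ∑ p ∈ M, |c p.1 * c p.2| := Finset.abs_sum_le_sum_abs _ _
      _ ≤ ∑ p ∈ M, (c p.1 ^ 2 + c p.2 ^ 2) / 2 := Finset.sum_le_sum fun p _ => habs_le _ _
      _ = ((∑ p ∈ M, c p.1 ^ 2) + ∑ p ∈ M, c p.2 ^ 2) / 2 := by
          rw [← Finset.sum_add_distrib, ← Finset.sum_div]
      _ ≤ (A + A) / 2 := by linarith
      _ = A := by ring
  -- r tends to 0
  have hr0 : Filter.Tendsto r Filter.atTop (nhds 0) := by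
    have : Filter.Tendsto (fun n => ∑ p ∈ R, c p.1 * c p.2 * s p.1 p.2 ^ n)
        Filter.atTop (nhds (∑ p ∈ R, 0)) := by
      refine tendsto_finset_sum _ fun p hp => ?_
      have hmem := Finset.mem_filter.mp hp
      have h1 : s p.1 p.2 < 1 := hs_lt_one _ _ hmem.2.1
      have h2 : -1 < s p.1 p.2 := lt_of_le_of_ne (hs_mem _ _).1 (Ne.symm hmem.2.2)
      have habs : |s p.1 p.2| < 1 := abs_lt.mpr ⟨h2, h1⟩
      have := tendsto_pow_atTop_nhds_zero_of_abs_lt_one habs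
      simpa using this.const_mul (c p.1 * c p.2)
    simpa using this
  -- nonnegativity of G
  have hGnonneg : ∀ n, 0 ≤ G n := fun n => pow_kernel_nonneg' x c n
  -- pick a good index n₀
  have hgood : ∃ n₀, 0 < b n₀ ∧ 0 < G n₀ := by
    have hrA : ∃ n₁ : ℕ, ∀ n ≥ n₁, |r n| < A := by
      have := (Metric.tendsto_atTop.mp hr0) A hA
      obtain ⟨n₁, hn₁⟩ := this
      exact ⟨n₁, fun n hn => by simpa [Real.dist_eq] using hn₁ n hn⟩
    obtain ⟨n₁, hn₁⟩ := hrA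
    rcases le_or_gt 0 B with hB0 | hB0
    · obtain ⟨n₀, hn₀mem, hn₀gt⟩ := heven.exists_gt n₁
      refine ⟨n₀, hn₀mem.2, ?_⟩
      have hrn : |r n₀| < A := hn₁ n₀ (le_of_lt hn₀gt)
      have : G n₀ = A + B + r n₀ := by
        rw [decomp n₀, Even.neg_one_pow hn₀mem.1, one_mul]
      rw [this]
      have := neg_abs_le (r n₀)
      linarith
    · obtain ⟨n₀, hn₀mem, hn₀gt⟩ := hodd.exists_gt n₁
      refine ⟨n₀, hn₀mem.2, ?_⟩
      have hrn : |r n₀| < A := hn₁ n₀ (le_of_lt hn₀gt)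
      have : G n₀ = A - B + r n₀ := by
        rw [decomp n₀, Odd.neg_one_pow hn₀mem.1]; ring
      rw [this]
      have := neg_abs_le (r n₀)
      linarith
  obtain ⟨n₀, hbn₀, hGn₀⟩ := hgood
  -- summability
  have hterm : ∀ p : Fin N × Fin N,
      HasSum (fun n => c p.1 * c p.2 * (b n * s p.1 p.2 ^ n))
        (c p.1 * c p.2 * f (s p.1 p.2)) :=
    fun p => (hsum _ (hs_mem _ _)).mul_left _
  have hS : HasSum (fun n => ∑ p : Fin N × Fin N, c p.1 * c p.2 * (b n * s p.1 p.2 ^ n))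
      (∑ p : Fin N × Fin N, c p.1 * c p.2 * f (s p.1 p.2)) :=
    hasSum_sum fun p _ => hterm p
  have hS' : HasSum (fun n => b n * G n)
      (∑ p : Fin N × Fin N, c p.1 * c p.2 * f (s p.1 p.2)) := by
    refine hS.congr_fun fun n => ?_
    rw [hGdef, Finset.mul_sum]
    exact Finset.sum_congr rfl fun p _ => by ring
  have htarget : ∑ i, ∑ j, c i * c j * f (inner ℝ (x i) (x j) : ℝ)
      = ∑ p : Fin N × Fin N, c p.1 * c p.2 * f (s p.1 p.2) := by
    rw [Fintype.sum_prod_type]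
  rw [htarget]
  have hle : b n₀ * G n₀ ≤ ∑ p : Fin N × Fin N, c p.1 * c p.2 * f (s p.1 p.2) :=
    le_hasSum hS' n₀ fun m _ => mul_nonneg (hb m) (hGnonneg m)
  exact lt_of_lt_of_le (mul_pos hbn₀ hGn₀) hle
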